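/- Let H be a continuous submodular function on a compact product X = ∏ᵢ Xᵢ ⊆ ℝⁿ, let γ ∈ P(X), and suppose there exist continuous potentials vᵢ : Xᵢ → ℝ with ∑ᵢ vᵢ(yᵢ) ≤ H(y) for all y ∈ X and equality ∑ᵢ vᵢ(xᵢ) = H(x) at every x ∈ supp(γ). If H is strictly submodular, then any two elements of supp(γ) are comparable in the componentwise order. -/

import Mathlib

open MeasureTheory

/-- The (topological) support of a measure on `Fin n → ℝ`. -/
def msupport {n : ℕ} (γ : Measure (Fin n → ℝ)) : Set (Fin n → ℝ) :=
  {p | ∀ U : Set (Fin n → ℝ), IsOpen U → p ∈ U → 0 < γ U}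

/-- For a continuous strictly submodular `H` on a compact product, if continuous
potentials `v i` satisfy `∑ i, v i (y i) ≤ H y` on the product with equality on the
support of `γ`, then any two elements of the support of `γ` are comparable. -/
theorem strict_submodular_support_chain (n : ℕ) (X : Fin n → Set ℝ)
    (hX : ∀ i, IsCompact (X i)) (H : (Fin n → ℝ) → ℝ)
    (hHc : ContinuousOn H (Set.pi Set.univ X))
    (hstrict : ∀ x y : Fin n → ℝ, (∀ i, x i ∈ X i) → (∀ i, y i ∈ X i) →
      ¬ x ≤ y → ¬ y ≤ x → H (x ⊓ y) + H (x ⊔ y) < H x + H y)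
    (γ : Measure (Fin n → ℝ)) (v : Fin n → ℝ → ℝ)
    (hv : ∀ i, ContinuousOn (v i) (X i))
    (hineq : ∀ y : Fin n → ℝ, (∀ i, y i ∈ X i) → ∑ i, v i (y i) ≤ H y)
    (hsuppX : ∀ x ∈ msupport γ, ∀ i, x i ∈ X i)
    (heq : ∀ x ∈ msupport γ, ∑ i, v i (x i) = H x) :
    ∀ x ∈ msupport γ, ∀ y ∈ msupport γ, x ≤ y ∨ y ≤ x := by
  intro x hx y hy
  by_contra h
  push_neg at h
  obtain ⟨hxy, hyx⟩ := h
  have hxX := hsuppX x hx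
  have hyX := hsuppX y hy
  have hminX : ∀ i, (x ⊓ y) i ∈ X i := by
    intro i
    rcases min_cases (x i) (y i) with ⟨h1, _⟩ | ⟨h1, _⟩ <;>
      simp only [Pi.inf_apply, h1] <;> [exact hxX i; exact hyX i]
  have hmaxX : ∀ i, (x ⊔ y) i ∈ X i := by
    intro i
    rcases max_cases (x i) (y i) with ⟨h1, _⟩ | ⟨h1, _⟩ <;>
      simp only [Pi.sup_apply, h1] <;> [exact hxX i; exact hyX i]
  have key : ∀ i, v i ((x ⊓ y) i) + v i ((x ⊔ y) i) = v i (x i) + v i (y i) := by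
    intro i
    simp only [Pi.inf_apply, Pi.sup_apply]
    rcases le_total (x i) (y i) with h1 | h1 <;>
      simp [min_eq_left, min_eq_right, max_eq_left, max_eq_right, h1] <;> ring
  have hsum : ∑ i, v i ((x ⊓ y) i) + ∑ i, v i ((x ⊔ y) i) =
      ∑ i, v i (x i) + ∑ i, v i (y i) := by
    rw [← Finset.sum_add_distrib, ← Finset.sum_add_distrib]
    exact Finset.sum_congr rfl (fun i _ => key i)
  have h1 := hineq (x ⊓ y) hminX
  have h2 := hineq (x ⊔ y) hmaxX
  have h3 := heq x hx
  have h4 := heq y hy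
  have h5 := hstrict x y hxX hyX hxy hyx
  linarith only [h1, h2, h3, h4, h5, hsum]
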